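/- Let K and K̃ be positive integers with K̃ < K. Let S_p and S_q be finite sets, let G₁, …, G_K be pairwise disjoint finite sets, and let Ĝ₁, …, Ĝ_K̃ be finite sets whose union contains S_p ∪ S_q. Suppose t ≥ 0 is a real number such that |G_l ∩ S_p| ≥ t and |G_l ∩ S_q| ≥ t for every l ∈ {1,…,K}, and let B be a K × K real matrix whose rows are pairwise distinct. Then there exist k₁, k₂ ∈ {1,…,K̃} and l₁, l₂, l₃ ∈ {1,…,K} with l₁ ≠ l₂ such that |Ĝ_{k₁} ∩ G_{l₁} ∩ S_p| ≥ t/K̃, |Ĝ_{k₁} ∩ G_{l₂} ∩ S_p| ≥ t/K̃, |Ĝ_{k₂} ∩ G_{l₃} ∩ S_q| ≥ t/K̃, and B_{l₁ l₃} ≠ B_{l₂ l₃}. -/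
import Mathlib

lemma exists_big_inter {ι : Type*} [DecidableEq ι] {Kt : ℕ} (hKt : 0 < Kt)
    (Ghat : Fin Kt → Finset ι) (S : Finset ι)
    (hS : S ⊆ Finset.univ.biUnion Ghat) :
    ∃ k : Fin Kt, S.card ≤ Kt * (Ghat k ∩ S).card := by
  have hKne : (Finset.univ : Finset (Fin Kt)).Nonempty := by
    simpa [Finset.univ_nonempty_iff] using Fin.pos_iff_nonempty.mp hKt
  obtain ⟨k, -, hk⟩ := Finset.exists_max_image Finset.univ
    (fun k => (Ghat k ∩ S).card) hKne
  refine ⟨k, ?_⟩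
  have hSeq : S ⊆ Finset.univ.biUnion (fun k => Ghat k ∩ S) := by
    intro x hx
    obtain ⟨j, -, hj⟩ := Finset.mem_biUnion.mp (hS hx)
    exact Finset.mem_biUnion.mpr ⟨j, Finset.mem_univ j, Finset.mem_inter.mpr ⟨hj, hx⟩⟩
  calc S.card ≤ (Finset.univ.biUnion (fun k => Ghat k ∩ S)).card :=
        Finset.card_le_card hSeq
    _ ≤ ∑ j : Fin Kt, (Ghat j ∩ S).card := Finset.card_biUnion_le
    _ ≤ ∑ _j : Fin Kt, (Ghat k ∩ S).card :=
        Finset.sum_le_sum (fun j _ => hk j (Finset.mem_univ j))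
    _ = Kt * (Ghat k ∩ S).card := by simp [Finset.sum_const, mul_comm]



/-- Deterministic pigeonhole core: if `K̃ < K`, the true communities `G l` each meet
`S_p` and `S_q` in at least `t` elements, the estimated communities `Ĝ k` cover
`S_p ∪ S_q`, and the rows of `B` are pairwise distinct, then there exist estimated
communities `k₁, k₂` and true communities `l₁ ≠ l₂, l₃` such that `Ĝ k₁` contains at
least `t/K̃` elements of both `G l₁ ∩ S_p` and `G l₂ ∩ S_p`, `Ĝ k₂` contains at least
`t/K̃` elements of `G l₃ ∩ S_q`, and `B l₁ l₃ ≠ B l₂ l₃`. -/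
theorem pigeonhole_merged_communities
    {ι : Type*} [DecidableEq ι]
    (K Kt : ℕ) (hKt : 0 < Kt) (hKtK : Kt < K)
    (Sp Sq : Finset ι) (G : Fin K → Finset ι) (Ghat : Fin Kt → Finset ι)
    (hGdisj : ∀ l₁ l₂ : Fin K, l₁ ≠ l₂ → Disjoint (G l₁) (G l₂))
    (hcover : Sp ∪ Sq ⊆ Finset.univ.biUnion Ghat)
    (t : ℝ) (ht : 0 ≤ t)
    (hGp : ∀ l : Fin K, t ≤ ((G l ∩ Sp).card : ℝ))
    (hGq : ∀ l : Fin K, t ≤ ((G l ∩ Sq).card : ℝ))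
    (B : Fin K → Fin K → ℝ)
    (hB : ∀ l₁ l₂ : Fin K, l₁ ≠ l₂ → B l₁ ≠ B l₂) :
    ∃ (k₁ k₂ : Fin Kt) (l₁ l₂ l₃ : Fin K), l₁ ≠ l₂ ∧
      t / Kt ≤ ((Ghat k₁ ∩ G l₁ ∩ Sp).card : ℝ) ∧
      t / Kt ≤ ((Ghat k₁ ∩ G l₂ ∩ Sp).card : ℝ) ∧
      t / Kt ≤ ((Ghat k₂ ∩ G l₃ ∩ Sq).card : ℝ) ∧
      B l₁ l₃ ≠ B l₂ l₃ := by
  have hKtR : (0:ℝ) < Kt := by exact_mod_cast hKt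
  have key : ∀ (S : Finset ι), S ⊆ Finset.univ.biUnion Ghat → t ≤ (S.card : ℝ) →
      ∃ k : Fin Kt, t / Kt ≤ ((Ghat k ∩ S).card : ℝ) := by
    intro S hS htS
    obtain ⟨k, hk⟩ := exists_big_inter hKt Ghat S hS
    refine ⟨k, ?_⟩
    rw [div_le_iff₀ hKtR]
    calc t ≤ (S.card : ℝ) := htS
      _ ≤ (Kt : ℝ) * ((Ghat k ∩ S).card : ℝ) := by exact_mod_cast hk
      _ = ((Ghat k ∩ S).card : ℝ) * Kt := mul_comm _ _
  have hsubp : ∀ l : Fin K, G l ∩ Sp ⊆ Finset.univ.biUnion Ghat := fun l x hx =>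
    hcover (Finset.mem_union_left _ (Finset.mem_inter.mp hx).2)
  have hsubq : ∀ l : Fin K, G l ∩ Sq ⊆ Finset.univ.biUnion Ghat := fun l x hx =>
    hcover (Finset.mem_union_right _ (Finset.mem_inter.mp hx).2)
  choose f hf using fun l => key (G l ∩ Sp) (hsubp l) (hGp l)
  choose g hg using fun l => key (G l ∩ Sq) (hsubq l) (hGq l)
  have : ¬ Function.Injective f := by
    intro hinj
    have := Fintype.card_le_of_injective f hinj
    simp at this
    omega
  rw [Function.not_injective_iff] at this
  obtain ⟨l₁, l₂, hfeq, hne⟩ := this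
  have hrow := hB l₁ l₂ hne
  have : ∃ l₃ : Fin K, B l₁ l₃ ≠ B l₂ l₃ := by
    by_contra h
    push_neg at h
    exact hrow (funext h)
  obtain ⟨l₃, hl₃⟩ := this
  refine ⟨f l₁, g l₃, l₁, l₂, l₃, hne, ?_, ?_, ?_, hl₃⟩
  · simpa [Finset.inter_assoc] using hf l₁
  · rw [hfeq]; simpa [Finset.inter_assoc] using hf l₂
  · simpa [Finset.inter_assoc] using hg l₃
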